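/- arXiv:2311.00582 — 2 statements merged into one kernel-verified Lean document; each statement's English description precedes it below -/
import Mathlib

section
/- If a finite two-player zero-sum matrix game R has a unique Nash equilibrium (p,q) with supports I = supp(p) and J = supp(q), then the block matrix [[R_{IJ}, -1_{|I|}]; [1ᵀ_{|J|}, 0]] is invertible; in particular |I| = |J|. -/
open Finset

/-- A mixed strategy: nonnegative entries summing to 1. -/
def isSimplex {n : ℕ} (p : Fin n → ℝ) : Prop := (∀ i, 0 ≤ p i) ∧ ∑ i, p i = 1

/-- Expected payoff `pᵀ R q` to player 1. -/
noncomputable def pay {m n : ℕ} (R : Matrix (Fin m) (Fin n) ℝ) (p : Fin m → ℝ)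
    (q : Fin n → ℝ) : ℝ :=
  ∑ i, ∑ j, p i * R i j * q j

/-- Payoff of pure row `i` against mixed column strategy `q`:  `e_iᵀ R q`. -/
noncomputable def rowPay {m n : ℕ} (R : Matrix (Fin m) (Fin n) ℝ) (i : Fin m)
    (q : Fin n → ℝ) : ℝ :=
  ∑ j, R i j * q j

/-- Payoff of mixed row strategy `p` against pure column `j`:  `pᵀ R e_j`. -/
noncomputable def colPay {m n : ℕ} (R : Matrix (Fin m) (Fin n) ℝ) (p : Fin m → ℝ)
    (j : Fin n) : ℝ :=
  ∑ i, p i * R i j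

/-- Nash equilibrium of the zero-sum matrix game `R`. -/
def isNash {m n : ℕ} (R : Matrix (Fin m) (Fin n) ℝ) (p : Fin m → ℝ)
    (q : Fin n → ℝ) : Prop :=
  isSimplex p ∧ isSimplex q ∧
    (∀ p', isSimplex p' → pay R p' q ≤ pay R p q) ∧
    (∀ q', isSimplex q' → pay R p q ≤ pay R p q')

/-- The block matrix `[[R_IJ, -1]; [1ᵀ, 0]]` on the supports of `p` and `q`. -/
noncomputable def blockMat {m n : ℕ} (R : Matrix (Fin m) (Fin n) ℝ) (p : Fin m → ℝ)
    (q : Fin n → ℝ) :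
    Matrix ({i : Fin m // 0 < p i} ⊕ Unit) ({j : Fin n // 0 < q j} ⊕ Unit) ℝ :=
  Matrix.of fun a b =>
    match a, b with
    | Sum.inl i, Sum.inl j => R i.1 j.1
    | Sum.inl _, Sum.inr _ => -1
    | Sum.inr _, Sum.inl _ => 1
    | Sum.inr _, Sum.inr _ => 0


section Farkas

variable {ι κ : Type} [Fintype ι] [Fintype κ]

def coneOf {E : Type} [AddCommGroup E] [Module ℝ E] (a : ι → E) : Set E :=
  {x | ∃ c : ι → ℝ, (∀ i, 0 ≤ c i) ∧ ∑ i, c i • a i = x}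

lemma sum_extend0 {E : Type} [AddCommGroup E] [Module ℝ E] (t : Finset ι) (f : ι → ℝ)
    (hf : ∀ i ∉ t, f i = 0) (b : ι → E) :
    ∑ i : ↥t, f ↑i • b ↑i = ∑ i, f i • b i := by
  rw [show (∑ i : ↥t, f ↑i • b ↑i) = ∑ i ∈ t.attach, f ↑i • b ↑i from rfl,
    Finset.sum_attach t (fun i => f i • b i)]
  exact (Finset.sum_subset (Finset.subset_univ t)
    (fun i _ hi => by rw [hf i hi, zero_smul]) : ∑ i ∈ t, f i • b i = ∑ i, f i • b i)

lemma cone_cara {E : Type} [AddCommGroup E] [Module ℝ E] (a : ι → E) :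
    ∀ (s : Finset ι) (c : ι → ℝ), (∀ i, 0 ≤ c i) → (∀ i ∉ s, c i = 0) →
    ∃ (t : Finset ι) (d : ι → ℝ), LinearIndependent ℝ (fun i : t => a i) ∧
      (∀ i, 0 ≤ d i) ∧ (∀ i ∉ t, d i = 0) ∧ ∑ i, d i • a i = ∑ i, c i • a i := by
  classical
  intro s
  induction s using Finset.strongInductionOn with
  | _ s ih =>
    intro c hc0 hcs
    by_cases hind : LinearIndependent ℝ (fun i : s => a i)
    · exact ⟨s, c, hind, hc0, hcs, rfl⟩
    · obtain ⟨g, hgsum, i₁, hi₁⟩ := Fintype.not_linearIndependent_iff.mp hind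
      set g' : ι → ℝ := fun i => if h : i ∈ s then g ⟨i, h⟩ else 0 with hg'def
      have hg's : ∀ i ∉ s, g' i = 0 := fun i hi => dif_neg hi
      have hg'i : ∀ i : ↥s, g' ↑i = g i := fun i => dif_pos i.2
      have hg'sum : ∑ i, g' i • a i = 0 := by
        rw [← sum_extend0 s g' hg's a]
        rw [show (∑ i : ↥s, g' ↑i • a ↑i) = ∑ i : ↥s, g i • a ↑i from
          Finset.sum_congr rfl fun i _ => by rw [hg'i i]]
        exact hgsum
      have hex : ∃ h : ι → ℝ, (∀ i ∉ s, h i = 0) ∧ (∑ i, h i • a i = 0) ∧ ∃ i ∈ s, 0 < h i := by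
        rcases lt_trichotomy (g' ↑i₁) 0 with h | h | h
        · refine ⟨-g', fun i hi => by simp [hg's i hi], by simp [hg'sum], ↑i₁, i₁.2, by
            simpa using h⟩
        · exact absurd ((hg'i i₁).symm.trans h) hi₁
        · exact ⟨g', hg's, hg'sum, ↑i₁, i₁.2, h⟩
      obtain ⟨h, hhs, hhsum, iw, hiws, hiw⟩ := hex
      obtain ⟨i₀, hi₀mem, hi₀min⟩ := Finset.exists_min_image (s.filter fun i => 0 < h i)
        (fun i => c i / h i) ⟨iw, Finset.mem_filter.mpr ⟨hiws, hiw⟩⟩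
      rw [Finset.mem_filter] at hi₀mem
      set τ := c i₀ / h i₀ with hτ
      have hτ0 : 0 ≤ τ := div_nonneg (hc0 i₀) hi₀mem.2.le
      set d : ι → ℝ := fun i => c i - τ * h i with hd
      have hd0 : ∀ i, 0 ≤ d i := by
        intro i
        by_cases his : i ∈ s
        · rcases le_or_gt (h i) 0 with hh | hh
          · have h1 : τ * h i ≤ 0 := mul_nonpos_of_nonneg_of_nonpos hτ0 hh
            have := hc0 i
            simp only [hd]
            linarith
          · have h2 := hi₀min i (Finset.mem_filter.mpr ⟨his, hh⟩)
            have h3 : τ * h i ≤ c i := (le_div_iff₀ hh).mp h2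
            simp only [hd]
            linarith
        · simp [hd, hcs i his, hhs i his]
      have hdi₀ : d i₀ = 0 := by
        have : h i₀ ≠ 0 := ne_of_gt hi₀mem.2
        simp only [hd, hτ]
        rw [div_mul_cancel₀ _ this, sub_self]
      have hds : ∀ i ∉ s.erase i₀, d i = 0 := by
        intro i hi
        rcases Finset.mem_erase.not.mp hi with hi'
        push_neg at hi'
        by_cases hii : i = i₀
        · rw [hii]; exact hdi₀
        · have his : i ∉ s := fun hin => hii (by simpa [hin] using hi' (by exact hii))
          simp [hd, hcs i his, hhs i his]
      have hdsum : ∑ i, d i • a i = ∑ i, c i • a i := by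
        simp only [hd, sub_smul, Finset.sum_sub_distrib, mul_smul]
        rw [← Finset.smul_sum, hhsum, smul_zero, sub_zero]
      obtain ⟨t, d', ht, hd'0, hd't, hd'sum⟩ :=
        ih (s.erase i₀) (Finset.erase_ssubset hi₀mem.1) d hd0 hds
      exact ⟨t, d', ht, hd'0, hd't, hd'sum.trans hdsum⟩


lemma isClosed_coneOf (a : ι → κ → ℝ) : IsClosed (coneOf a) := by
  classical
  have comp : ∀ t : Finset ι, LinearIndependent ℝ (fun i : t => a i) →
      IsClosed ((fun f : (↥t → ℝ) => ∑ i, f i • a (↑i)) '' {f | ∀ i, 0 ≤ f i}) := by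
    intro t ht
    let L : (↥t → ℝ) →ₗ[ℝ] (κ → ℝ) :=
      { toFun := fun f => ∑ i, f i • a ↑i
        map_add' := by intro f g; simp [add_smul, Finset.sum_add_distrib]
        map_smul' := by intro r f; simp [Finset.smul_sum, mul_smul] }
    have hker : LinearMap.ker L = ⊥ := by
      rw [LinearMap.ker_eq_bot']
      intro f hf
      funext i
      exact Fintype.linearIndependent_iff.mp ht f hf i
    have hce := LinearMap.isClosedEmbedding_of_injective hker
    have horth : IsClosed {f : ↥t → ℝ | ∀ i, 0 ≤ f i} := by
      have : {f : ↥t → ℝ | ∀ i, 0 ≤ f i} = ⋂ i, {f | 0 ≤ f i} := by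
        ext f; simp [Set.mem_iInter]
      rw [this]
      exact isClosed_iInter fun i => isClosed_le continuous_const (continuous_apply i)
    exact hce.isClosedMap _ horth
  have hset : coneOf a = ⋃ (t : Finset ι) (_ : LinearIndependent ℝ (fun i : t => a i)),
      ((fun f : (↥t → ℝ) => ∑ i, f i • a (↑i)) '' {f | ∀ i, 0 ≤ f i}) := by
    ext x
    simp only [Set.mem_iUnion, Set.mem_image, Set.mem_setOf_eq]
    constructor
    · rintro ⟨c, hc0, hcsum⟩
      obtain ⟨t, d, ht, hd0, hdt, hdsum⟩ := cone_cara a Finset.univ c hc0 (by simp)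
      refine ⟨t, ht, fun i => d ↑i, fun i => hd0 ↑i, ?_⟩
      rw [sum_extend0 t d hdt a, hdsum, hcsum]
    · rintro ⟨t, ht, f, hf0, hfsum⟩
      set c : ι → ℝ := fun i => if h : i ∈ t then f ⟨i, h⟩ else 0 with hc
      have hct : ∀ i ∉ t, c i = 0 := fun i hi => dif_neg hi
      refine ⟨c, fun i => ?_, ?_⟩
      · by_cases h : i ∈ t <;> simp [hc, h, hf0]
      · rw [← sum_extend0 t c hct a, ← hfsum]
        exact Finset.sum_congr rfl fun i _ => by simp [hc]
  rw [hset]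
  exact isClosed_iUnion_of_finite fun t => isClosed_iUnion_of_finite fun ht => comp t ht


lemma farkas (a : ι → κ → ℝ) (b : κ → ℝ) (hb : b ∉ coneOf a) :
    ∃ y : κ → ℝ, (∀ i, ∑ k, a i k * y k ≤ 0) ∧ 0 < ∑ k, b k * y k := by
  classical
  have hconv : Convex ℝ (coneOf a) := by
    rintro x hx z hz s t hs ht hst
    obtain ⟨cx, hcx0, hcx⟩ := hx
    obtain ⟨cz, hcz0, hcz⟩ := hz
    refine ⟨fun i => s * cx i + t * cz i,
      fun i => add_nonneg (mul_nonneg hs (hcx0 i)) (mul_nonneg ht (hcz0 i)), ?_⟩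
    simp only [add_smul, mul_smul, Finset.sum_add_distrib, ← Finset.smul_sum, hcx, hcz]
  obtain ⟨f, u, hfb, hfC⟩ := geometric_hahn_banach_point_closed hconv (isClosed_coneOf a) hb
  have h0 : (0 : κ → ℝ) ∈ coneOf a := ⟨0, fun i => le_refl 0, by simp⟩
  have hu0 : u < 0 := by simpa using hfC 0 h0
  have hfa : ∀ i, 0 ≤ f (a i) := by
    intro i
    by_contra hneg
    push_neg at hneg
    have hmem : (u / f (a i)) • a i ∈ coneOf a := by
      refine ⟨fun i' => if i' = i then u / f (a i) else 0, fun i' => ?_, ?_⟩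
      · by_cases h : i' = i <;>
          simp [h, div_nonneg_iff.mpr (Or.inr ⟨hu0.le, hneg.le⟩)]
      · simp [ite_smul]
    have h2 := hfC _ hmem
    rw [map_smul, smul_eq_mul, div_mul_cancel₀ u hneg.ne] at h2
    exact lt_irrefl u h2
  have hrepr : ∀ x : κ → ℝ, f x = ∑ k, x k * f (Pi.single k 1) := by
    intro x
    rw [show f x = f (∑ k, Pi.single k (x k)) by rw [Finset.univ_sum_single], map_sum]
    refine Finset.sum_congr rfl fun k _ => ?_
    have hsingle : Pi.single k (x k) = x k • (Pi.single k (1 : ℝ) : κ → ℝ) := by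
      funext j
      by_cases h : j = k <;> simp [Pi.single_apply, h]
    rw [hsingle, map_smul, smul_eq_mul]
  refine ⟨fun k => -f (Pi.single k 1), fun i => ?_, ?_⟩
  · have h1 := hfa i
    rw [hrepr (a i)] at h1
    simp only [mul_neg]
    rw [Finset.sum_neg_distrib]
    linarith
  · have h2 : f b < 0 := hfb.trans hu0
    rw [hrepr b] at h2
    simp only [mul_neg]
    rw [Finset.sum_neg_distrib]
    linarith

end Farkas

section Game
open Finset

variable {m n : ℕ}

lemma pay_rows (R : Matrix (Fin m) (Fin n) ℝ) (p : Fin m → ℝ) (q : Fin n → ℝ) :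
    pay R p q = ∑ i, p i * rowPay R i q := by
  simp [pay, rowPay, Finset.mul_sum, mul_assoc]

lemma pay_cols (R : Matrix (Fin m) (Fin n) ℝ) (p : Fin m → ℝ) (q : Fin n → ℝ) :
    pay R p q = ∑ j, colPay R p j * q j := by
  rw [pay, Finset.sum_comm]
  simp [colPay, Finset.sum_mul]

lemma isSimplex_single {k : ℕ} (i : Fin k) : isSimplex (Pi.single i 1 : Fin k → ℝ) := by
  constructor
  · intro i'
    by_cases h : i' = i <;> simp [Pi.single_apply, h]
  · simp

lemma sum_mul_le {k : ℕ} {c x : Fin k → ℝ} {v : ℝ} (hc : isSimplex c) (hx : ∀ i, x i ≤ v) :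
    ∑ i, c i * x i ≤ v := by
  calc ∑ i, c i * x i ≤ ∑ i, c i * v :=
        Finset.sum_le_sum fun i _ => mul_le_mul_of_nonneg_left (hx i) (hc.1 i)
  _ = v := by rw [← Finset.sum_mul, hc.2, one_mul]

lemma le_sum_mul {k : ℕ} {c x : Fin k → ℝ} {v : ℝ} (hc : isSimplex c) (hx : ∀ i, v ≤ x i) :
    v ≤ ∑ i, x i * c i := by
  calc v = ∑ i, v * c i := by rw [← Finset.mul_sum, hc.2, mul_one]
  _ ≤ ∑ i, x i * c i :=
        Finset.sum_le_sum fun i _ => mul_le_mul_of_nonneg_right (hx i) (hc.1 i)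

variable {R : Matrix (Fin m) (Fin n) ℝ} {p : Fin m → ℝ} {q : Fin n → ℝ}

lemma row_le (hNE : isNash R p q) (i : Fin m) : rowPay R i q ≤ pay R p q := by
  have h := hNE.2.2.1 (Pi.single i 1) (isSimplex_single i)
  rw [pay_rows] at h
  simpa [Pi.single_apply, ite_mul] using h

lemma le_col (hNE : isNash R p q) (j : Fin n) : pay R p q ≤ colPay R p j := by
  have h := hNE.2.2.2 (Pi.single j 1) (isSimplex_single j)
  rw [pay_cols R p (Pi.single j 1)] at h
  simpa [Pi.single_apply, mul_ite] using h

lemma row_eq (hNE : isNash R p q) {i : Fin m} (hi : 0 < p i) :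
    rowPay R i q = pay R p q := by
  by_contra hne
  have hlt : rowPay R i q < pay R p q := lt_of_le_of_ne (row_le hNE i) hne
  have h2 : ∑ i', p i' * rowPay R i' q < ∑ i', p i' * pay R p q := by
    apply Finset.sum_lt_sum
    · intro i' _
      exact mul_le_mul_of_nonneg_left (row_le hNE i') (hNE.1.1 i')
    · exact ⟨i, Finset.mem_univ i, mul_lt_mul_of_pos_left hlt hi⟩
  rw [← pay_rows, ← Finset.sum_mul, hNE.1.2, one_mul] at h2
  exact lt_irrefl _ h2

lemma col_eq (hNE : isNash R p q) {j : Fin n} (hj : 0 < q j) :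
    colPay R p j = pay R p q := by
  by_contra hne
  have hlt : pay R p q < colPay R p j := lt_of_le_of_ne (le_col hNE j) (Ne.symm hne)
  have h2 : ∑ j', pay R p q * q j' < ∑ j', colPay R p j' * q j' := by
    apply Finset.sum_lt_sum
    · intro j' _
      exact mul_le_mul_of_nonneg_right (le_col hNE j') (hNE.2.1.1 j')
    · exact ⟨j, Finset.mem_univ j, mul_lt_mul_of_pos_right hlt hj⟩
  rw [← pay_cols, ← Finset.mul_sum, hNE.2.1.2, mul_one] at h2
  exact lt_irrefl _ h2

lemma nash_of_row_opt (hNE : isNash R p q) {q' : Fin n → ℝ} (hq' : isSimplex q')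
    (hopt : ∀ i, rowPay R i q' ≤ pay R p q) : isNash R p q' := by
  have hub : pay R p q' ≤ pay R p q := by
    rw [pay_rows]; exact sum_mul_le hNE.1 hopt
  have hlb : pay R p q ≤ pay R p q' := by
    rw [pay_cols R p q']; exact le_sum_mul hq' (le_col hNE)
  have hv : pay R p q' = pay R p q := le_antisymm hub hlb
  refine ⟨hNE.1, hq', ?_, ?_⟩
  · intro p'' hp''
    rw [hv, pay_rows]
    exact sum_mul_le hp'' hopt
  · intro q'' hq''
    rw [hv, pay_cols R p q'']
    exact le_sum_mul hq'' (le_col hNE)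

lemma nash_of_col_opt (hNE : isNash R p q) {p' : Fin m → ℝ} (hp' : isSimplex p')
    (hopt : ∀ j, pay R p q ≤ colPay R p' j) : isNash R p' q := by
  have hub : pay R p' q ≤ pay R p q := by
    rw [pay_rows]; exact sum_mul_le hp' (row_le hNE)
  have hlb : pay R p q ≤ pay R p' q := by
    rw [pay_cols R p' q]; exact le_sum_mul hNE.2.1 hopt
  have hv : pay R p' q = pay R p q := le_antisymm hub hlb
  refine ⟨hp', hNE.2.1, ?_, ?_⟩
  · intro p'' hp''
    rw [hv, pay_rows]
    exact sum_mul_le hp'' (row_le hNE)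
  · intro q'' hq''
    rw [hv, pay_cols R p' q'']
    exact le_sum_mul hq'' hopt

lemma strict_row (hNE : isNash R p q)
    (huniq : ∀ p' q', isNash R p' q' → p' = p ∧ q' = q)
    (i₀ : Fin m) (hv : pay R p q ≤ rowPay R i₀ q) : 0 < p i₀ := by
  classical
  by_contra hp0'
  have hp0 : p i₀ = 0 := le_antisymm (not_lt.mp hp0') (hNE.1.1 i₀)
  set v := pay R p q with hvdef
  set a : (Sum (Fin m) (Sum (Fin n) Unit)) → (Sum (Fin n) Unit) → ℝ := fun i' =>
    match i' with
    | Sum.inl i => Sum.elim (fun j => R i j - v) (fun _ => if i = i₀ then 1 else 0)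
    | Sum.inr b => fun k => if k = b then -1 else 0
    with ha
  set bv : Sum (Fin n) Unit → ℝ := Sum.elim (fun _ => 0) (fun _ => 1) with hbv
  have hmem : bv ∉ coneOf a := by
    rintro ⟨c, hc0, hsum⟩
    set x : Fin m → ℝ := fun i => c (Sum.inl i) with hx
    have hcoord : ∀ k, ∑ i', c i' * a i' k = bv k := by
      intro k
      have h := congrFun hsum k
      simpa [Finset.sum_apply, Pi.smul_apply, smul_eq_mul] using h
    have hT : (0:ℝ) < ∑ i, x i := by
      have h1 := hcoord (Sum.inr ())
      rw [Fintype.sum_sum_type] at h1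
      simp only [ha, hbv, Sum.elim_inr, mul_ite, mul_one, mul_zero, Finset.sum_ite_eq',
        Finset.mem_univ, if_true] at h1
      -- h1 : ∑ i, c (inl i) * (if i = i₀ then 1 else 0) + ∑ b, c (inr b) * (if inr () = b then -1 else 0) = 1
      have h2 : x i₀ - c (Sum.inr (Sum.inr ())) = 1 := by
        simp [mul_ite, mul_neg] at h1
        show c (Sum.inl i₀) - c (Sum.inr (Sum.inr ())) = 1
        linarith
      have h3 : (1:ℝ) ≤ x i₀ := by
        have := hc0 (Sum.inr (Sum.inr ()))
        linarith
      have h4 : x i₀ ≤ ∑ i, x i :=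
        Finset.single_le_sum (fun i _ => hc0 (Sum.inl i)) (Finset.mem_univ i₀)
      linarith
    have hA : ∀ j, v * (∑ i, x i) ≤ ∑ i, x i * R i j := by
      intro j
      have h1 := hcoord (Sum.inl j)
      rw [Fintype.sum_sum_type] at h1
      simp only [ha, hbv, Sum.elim_inl, mul_ite, mul_neg, mul_one, mul_zero,
        Finset.sum_ite_eq', Finset.sum_ite_eq, Finset.mem_univ, if_true] at h1
      -- h1 : ∑ i, c (inl i) * (R i j - v) - c (inr (inl j)) = 0
      have h2 : ∑ i, x i * (R i j - v) = c (Sum.inr (Sum.inl j)) := by linarith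
      have h3 : ∑ i, x i * (R i j - v) = (∑ i, x i * R i j) - (∑ i, x i) * v := by
        simp [mul_sub, Finset.sum_sub_distrib, Finset.sum_mul]
      have h4 := hc0 (Sum.inr (Sum.inl j))
      nlinarith
    set T := ∑ i, x i with hTdef
    set p' : Fin m → ℝ := fun i => x i / T with hp'
    have hp'simplex : isSimplex p' := by
      constructor
      · intro i; exact div_nonneg (hc0 (Sum.inl i)) hT.le
      · rw [← Finset.sum_div]; field_simp; rfl
    have hopt : ∀ j, pay R p q ≤ colPay R p' j := by
      intro j
      have : colPay R p' j = (∑ i, x i * R i j) / T := by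
        simp [colPay, hp', div_mul_eq_mul_div, Finset.sum_div]
      rw [this, le_div_iff₀ hT]
      exact hA j
    have hNash' := nash_of_col_opt hNE hp'simplex hopt
    have hpp := (huniq p' q hNash').1
    have : p i₀ = x i₀ / T := by rw [← hpp]
    have h3 : (1:ℝ) ≤ x i₀ := by
      have h1 := hcoord (Sum.inr ())
      rw [Fintype.sum_sum_type] at h1
      simp only [ha, hbv, Sum.elim_inr, mul_ite, mul_one, mul_zero, Finset.sum_ite_eq',
        Finset.mem_univ, if_true] at h1
      have h2 : x i₀ - c (Sum.inr (Sum.inr ())) = 1 := by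
        simp [mul_ite, mul_neg] at h1
        show c (Sum.inl i₀) - c (Sum.inr (Sum.inr ())) = 1
        linarith
      have := hc0 (Sum.inr (Sum.inr ()))
      linarith
    rw [this] at hp0
    have : (0:ℝ) < x i₀ / T := div_pos (by linarith) hT
    linarith
  obtain ⟨y, hy1, hy2⟩ := farkas a bv hmem
  have hy0 : ∀ b, 0 ≤ y b := by
    intro b
    have h1 := hy1 (Sum.inr b)
    simp only [ha, ite_mul, neg_mul, one_mul, zero_mul, Finset.sum_ite_eq,
      Finset.sum_ite_eq', Finset.mem_univ, if_true] at h1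
    linarith
  set t := y (Sum.inr ()) with htdef
  have ht : 0 < t := by
    rw [Fintype.sum_sum_type] at hy2
    simpa [hbv] using hy2
  set w : Fin n → ℝ := fun j => y (Sum.inl j) with hw
  have hrowbd : ∀ i, (∑ j, R i j * w j) + (if i = i₀ then 1 else 0) * t ≤ v * ∑ j, w j := by
    intro i
    have h1 := hy1 (Sum.inl i)
    rw [Fintype.sum_sum_type] at h1
    simp only [ha, Sum.elim_inl, Sum.elim_inr] at h1
    have h3 : ∑ j, (R i j - v) * w j = (∑ j, R i j * w j) - v * ∑ j, w j := by
      simp [sub_mul, Finset.sum_sub_distrib, Finset.mul_sum]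
    -- h1 : ∑ j, (R i j - v) * y (inl j) + ∑ u : Unit, (if i = i₀ then 1 else 0) * y (inr u) ≤ 0
    have h4 : ∑ u : Unit, (if i = i₀ then (1:ℝ) else 0) * y (Sum.inr u) =
        (if i = i₀ then 1 else 0) * t := by simp [htdef]
    rw [h4] at h1
    have h5 : ∑ j, (R i j - v) * y (Sum.inl j) = ∑ j, (R i j - v) * w j := rfl
    rw [h5, h3] at h1
    linarith
  set S := ∑ j, w j with hSdef
  have hS : 0 < S := by
    rcases lt_or_ge 0 S with h | h
    · exact h
    · have hS0 : S = 0 := le_antisymm h (Finset.sum_nonneg fun j _ => hy0 (Sum.inl j))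
      have hw0 : ∀ j, w j = 0 := by
        intro j
        have := (Finset.sum_eq_zero_iff_of_nonneg (fun j _ => hy0 (Sum.inl j))).mp hS0
        exact this j (Finset.mem_univ j)
      have h1 := hrowbd i₀
      have h2 : ∑ j, R i₀ j * w j = 0 := Finset.sum_eq_zero fun j _ => by rw [hw0 j, mul_zero]
      rw [h2, hS0] at h1
      simp at h1
      linarith
  set q' : Fin n → ℝ := fun j => w j / S with hq'
  have hq'simplex : isSimplex q' := by
    constructor
    · intro j; exact div_nonneg (hy0 (Sum.inl j)) hS.le
    · rw [← Finset.sum_div]; field_simp; rfl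
  have hrq' : ∀ i, rowPay R i q' = (∑ j, R i j * w j) / S := by
    intro i
    simp [rowPay, hq', mul_div_assoc, Finset.sum_div]
  have hopt : ∀ i, rowPay R i q' ≤ v := by
    intro i
    rw [hrq' i, div_le_iff₀ hS]
    have h1 := hrowbd i
    have h2 : (0:ℝ) ≤ (if i = i₀ then 1 else 0) * t := by
      split <;> simp [ht.le]
    linarith
  have hNash' := nash_of_row_opt hNE hq'simplex hopt
  have hqq := (huniq p q' hNash').2
  have hlt : rowPay R i₀ q' < v := by
    rw [hrq' i₀, div_lt_iff₀ hS]
    have h1 := hrowbd i₀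
    rw [if_pos rfl, one_mul] at h1
    linarith
  rw [hqq] at hlt
  linarith

lemma pay_dual (R : Matrix (Fin m) (Fin n) ℝ) (p : Fin m → ℝ) (q : Fin n → ℝ) :
    pay (Matrix.of fun j i => -R i j) q p = -pay R p q := by
  rw [pay, pay, Finset.sum_comm, ← Finset.sum_neg_distrib]
  refine Finset.sum_congr rfl fun i _ => ?_
  rw [← Finset.sum_neg_distrib]
  refine Finset.sum_congr rfl fun j _ => ?_
  show q j * (-R i j) * p i = -(p i * R i j * q j)
  ring

lemma isNash_dual (hNE : isNash R p q) : isNash (Matrix.of fun j i => -R i j) q p := by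
  obtain ⟨hp, hq, h1, h2⟩ := hNE
  refine ⟨hq, hp, ?_, ?_⟩
  · intro q' hq'
    rw [pay_dual, pay_dual]
    exact neg_le_neg (h2 q' hq')
  · intro p' hp'
    rw [pay_dual, pay_dual]
    exact neg_le_neg (h1 p' hp')

lemma sum_dite_subtype {α : Type} [Fintype α] (P : α → Prop) [DecidablePred P]
    (g : ∀ j, P j → ℝ) :
    ∑ j, (if h : P j then g j h else 0) = ∑ j : {j // P j}, g j.1 j.2 := by
  classical
  have h1 : ∑ j, (if h : P j then g j h else 0)
      = ∑ j ∈ Finset.univ.filter P, (if h : P j then g j h else 0) := by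
    refine (Finset.sum_subset (Finset.filter_subset _ _) ?_).symm
    intro j _ hj
    rw [dif_neg (by simpa using hj)]
  rw [h1, Finset.sum_subtype (p := P) (Finset.univ.filter P) (fun x => by simp)
    (fun j => if h : P j then g j h else 0)]
  exact Finset.sum_congr rfl fun j _ => dif_pos j.2

lemma ker_block (hNE : isNash R p q)
    (huniq : ∀ p' q', isNash R p' q' → p' = p ∧ q' = q)
    (x : ({j : Fin n // 0 < q j} ⊕ Unit) → ℝ)
    (hker : ∀ i : {i : Fin m // 0 < p i},
      ∑ j : {j : Fin n // 0 < q j}, R i.1 j.1 * x (Sum.inl j) = x (Sum.inr ()))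
    (hsum : ∑ j : {j : Fin n // 0 < q j}, x (Sum.inl j) = 0) :
    x = 0 := by
  classical
  by_contra hx0
  set v := pay R p q with hvdef
  set β := x (Sum.inr ()) with hβdef
  set y : Fin n → ℝ := fun j => if h : 0 < q j then x (Sum.inl ⟨j, h⟩) else 0 with hy
  have hyzero : ∀ j, ¬ 0 < q j → y j = 0 := fun j h => dif_neg h
  have hsub : ∀ f : Fin n → ℝ,
      ∑ j, f j * y j = ∑ j : {j : Fin n // 0 < q j}, f j.1 * x (Sum.inl j) := by
    intro f
    have h1 : ∀ j, f j * y j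
        = dite (0 < q j) (fun h => f j * x (Sum.inl ⟨j, h⟩)) (fun _ => (0:ℝ)) := by
      intro j; by_cases h : 0 < q j <;> simp [hy, h]
    rw [Finset.sum_congr rfl fun j _ => h1 j,
      sum_dite_subtype (fun j => 0 < q j) (fun j h => f j * x (Sum.inl ⟨j, h⟩))]
  have hrow : ∀ i : Fin m, 0 < p i → ∑ j, R i j * y j = β := by
    intro i hi
    rw [hsub (fun j => R i j)]
    exact hker ⟨i, hi⟩
  have hysum : ∑ j, y j = 0 := by
    have h := hsub (fun _ => (1:ℝ))
    simp only [one_mul] at h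
    exact h.trans hsum
  have hIne : ∃ i, 0 < p i := by
    by_contra h
    push_neg at h
    have hz : ∀ i, p i = 0 := fun i => le_antisymm (h i) (hNE.1.1 i)
    have h1 := hNE.1.2
    rw [Finset.sum_congr rfl fun i _ => hz i] at h1
    simp at h1
  have hyne : y ≠ 0 := by
    intro hy0
    apply hx0
    have hβ0 : β = 0 := by
      obtain ⟨i, hi⟩ := hIne
      have h2 := hrow i hi
      simp only [hy0, Pi.zero_apply, mul_zero, Finset.sum_const_zero] at h2
      exact h2.symm
    funext b
    cases b with
    | inl j =>
      have h1 : y j.1 = 0 := by rw [hy0]; rfl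
      rw [hy] at h1
      simp only [j.2, dif_pos] at h1
      exact h1
    | inr u =>
      cases u
      exact hβ0
  obtain ⟨j₁, hj₁⟩ : ∃ j, y j ≠ 0 := by
    by_contra h; push_neg at h; exact hyne (funext h)
  have hqj₁ : 0 < q j₁ := by
    by_contra h; exact hj₁ (hyzero j₁ h)
  have hscomp : ∀ i, p i = 0 → rowPay R i q < v := by
    intro i hpi
    rcases lt_or_ge (rowPay R i q) v with h | h
    · exact h
    · have h2 := strict_row hNE huniq i h
      rw [hpi] at h2
      exact absurd h2 (lt_irrefl 0)
  set r : Fin m → ℝ := fun i => ∑ j, R i j * y j with hr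
  haveI : Nonempty (Fin n) := ⟨j₁⟩
  haveI : Nonempty (Fin m) := ⟨hIne.choose⟩
  set δ₁ : ℝ := Finset.univ.inf' Finset.univ_nonempty
    (fun j : Fin n => if 0 < q j then q j / (|y j| + 1) else 1) with hδ₁
  have hδ₁pos : 0 < δ₁ := by
    rw [hδ₁, Finset.lt_inf'_iff]
    intro j _
    by_cases h : 0 < q j
    · rw [if_pos h]
      exact div_pos h (by positivity)
    · rw [if_neg h]; norm_num
  have hδ₁le : ∀ j, 0 < q j → δ₁ ≤ q j / (|y j| + 1) := by
    intro j h
    have h2 := Finset.inf'_le (fun j : Fin n => if 0 < q j then q j / (|y j| + 1) else 1)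
      (Finset.mem_univ j)
    rwa [if_pos h] at h2
  set δ₂ : ℝ := Finset.univ.inf' Finset.univ_nonempty
    (fun i : Fin m => if 0 < p i then 1 else (v - rowPay R i q) / (|r i - β| + 1)) with hδ₂
  have hδ₂pos : 0 < δ₂ := by
    rw [hδ₂, Finset.lt_inf'_iff]
    intro i _
    by_cases h : 0 < p i
    · rw [if_pos h]; norm_num
    · rw [if_neg h]
      have hpi : p i = 0 := le_antisymm (not_lt.mp h) (hNE.1.1 i)
      have := hscomp i hpi
      apply div_pos (by linarith) (by positivity)
  have hδ₂le : ∀ i, p i = 0 → δ₂ ≤ (v - rowPay R i q) / (|r i - β| + 1) := by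
    intro i h
    have h2 := Finset.inf'_le
      (fun i : Fin m => if 0 < p i then 1 else (v - rowPay R i q) / (|r i - β| + 1))
      (Finset.mem_univ i)
    have h3 : ¬ 0 < p i := by rw [h]; exact lt_irrefl 0
    rwa [if_neg h3] at h2
  set ε : ℝ := (if 0 ≤ β then -1 else 1) * min δ₁ δ₂ with hε
  have hδmin : 0 < min δ₁ δ₂ := lt_min hδ₁pos hδ₂pos
  have hεne : ε ≠ 0 := by
    rw [hε]
    rcases le_or_gt 0 β with h | h
    · rw [if_pos h]; intro hc; nlinarith
    · rw [if_neg (not_le.mpr h)]; intro hc; nlinarith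
  have hεabs : |ε| = min δ₁ δ₂ := by
    rw [hε, abs_mul]
    rcases le_or_gt 0 β with h | h
    · rw [if_pos h]; simp [abs_of_pos hδmin]
    · rw [if_neg (not_le.mpr h)]; simp [abs_of_pos hδmin]
  have hεβ : ε * β ≤ 0 := by
    rw [hε]
    rcases le_or_gt 0 β with h | h
    · rw [if_pos h]; nlinarith
    · rw [if_neg (not_le.mpr h)]; nlinarith
  set q' : Fin n → ℝ := fun j => q j + ε * y j with hq'
  have hq'sim : isSimplex q' := by
    constructor
    · intro j
      by_cases h : 0 < q j
      · have h1 : |ε| ≤ q j / (|y j| + 1) := le_trans (hεabs ▸ min_le_left δ₁ δ₂) (hδ₁le j h)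
        have h2 : |ε * y j| ≤ q j := by
          rw [abs_mul]
          have h3 : 0 ≤ |y j| := abs_nonneg _
          have h4 : |ε| * (|y j| + 1) ≤ q j := by
            rw [← le_div_iff₀ (by positivity)]
            exact h1
          nlinarith [abs_nonneg ε]
        have h5 := neg_abs_le (ε * y j)
        simp only [hq']
        linarith
      · simp only [hq', hyzero j h, mul_zero, add_zero]
        exact hNE.2.1.1 j
    · simp only [hq']
      rw [Finset.sum_add_distrib, ← Finset.mul_sum, hysum, mul_zero, add_zero]
      exact hNE.2.1.2
  have hrow' : ∀ i, rowPay R i q' = rowPay R i q + ε * r i := by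
    intro i
    rw [rowPay, rowPay]
    simp only [hq', mul_add]
    rw [Finset.sum_add_distrib, hr]
    congr 1
    rw [Finset.mul_sum]
    exact Finset.sum_congr rfl fun j _ => by ring
  have hopt : ∀ i, rowPay R i q' ≤ v + ε * β := by
    intro i
    by_cases hi : 0 < p i
    · rw [hrow' i, row_eq hNE hi, show r i = β from hrow i hi]
    · have hpi : p i = 0 := le_antisymm (not_lt.mp hi) (hNE.1.1 i)
      have h1 := hscomp i hpi
      have h2 : |ε| ≤ (v - rowPay R i q) / (|r i - β| + 1) :=
        le_trans (hεabs ▸ min_le_right δ₁ δ₂) (hδ₂le i hpi)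
      have h3 : |ε * (r i - β)| ≤ v - rowPay R i q := by
        rw [abs_mul]
        have h4 : 0 ≤ |r i - β| := abs_nonneg _
        have h5 : |ε| * (|r i - β| + 1) ≤ v - rowPay R i q := by
          rw [← le_div_iff₀ (by positivity)]
          exact h2
        nlinarith [abs_nonneg ε]
      have h6 : ε * (r i - β) ≤ |ε * (r i - β)| := le_abs_self _
      have h7 : ε * r i = ε * β + ε * (r i - β) := by ring
      rw [hrow' i, h7]
      linarith
  have hpay : pay R p q' = v + ε * β := by
    rw [pay_rows]
    have h1 : ∀ i, p i * rowPay R i q' = p i * (v + ε * β) := by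
      intro i
      by_cases hi : 0 < p i
      · rw [hrow' i, row_eq hNE hi, show r i = β from hrow i hi]
      · have hpi : p i = 0 := le_antisymm (not_lt.mp hi) (hNE.1.1 i)
        rw [hpi, zero_mul, zero_mul]
    rw [Finset.sum_congr rfl fun i _ => h1 i, ← Finset.sum_mul, hNE.1.2, one_mul]
  have hNash' : isNash R p q' := by
    refine ⟨hNE.1, hq'sim, ?_, ?_⟩
    · intro p'' hp''
      rw [hpay, pay_rows]
      exact sum_mul_le hp'' hopt
    · intro q'' hq''
      rw [hpay, pay_cols R p q'']
      have h1 := le_sum_mul hq'' (le_col hNE)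
      linarith
  have hq'q := (huniq p q' hNash').2
  have h1 : q' j₁ = q j₁ := by rw [hq'q]
  have h2 : ε * y j₁ = 0 := by
    simp only [hq'] at h1
    linarith
  rcases mul_eq_zero.mp h2 with h | h
  · exact hεne h
  · exact hj₁ h

end Game

/-- If `R` has a unique Nash equilibrium `(p,q)`, then the block matrix
`[[R_IJ, -1]; [1ᵀ, 0]]` is invertible; in particular `|I| = |J|`. -/
theorem stmt3 {m n : ℕ} (R : Matrix (Fin m) (Fin n) ℝ)
    (p : Fin m → ℝ) (q : Fin n → ℝ)
    (hNE : isNash R p q)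
    (huniq : ∀ p' q', isNash R p' q' → p' = p ∧ q' = q) :
    Function.Bijective (Matrix.mulVecLin (blockMat R p q)) ∧
      Fintype.card {i : Fin m // 0 < p i} = Fintype.card {j : Fin n // 0 < q j} := by
  classical
  set M := blockMat R p q with hM
  have hNEd : isNash (Matrix.of fun j i => -R i j) q p := isNash_dual hNE
  have huniqd : ∀ q' p', isNash (Matrix.of fun j i => -R i j) q' p' → q' = q ∧ p' = p := by
    intro q' p' h
    have h2 : isNash R p' q' := by
      have h3 := isNash_dual h
      have h4 : (Matrix.of fun (i : Fin m) (j : Fin n) =>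
          -((Matrix.of fun j i => -R i j) j i)) = R := by
        ext i j
        simp
      rwa [h4] at h3
    exact ⟨(huniq p' q' h2).2, (huniq p' q' h2).1⟩
  have hkerM : ∀ x, M.mulVec x = 0 → x = 0 := by
    intro x hx
    apply ker_block hNE huniq x
    · intro i
      have h := congrFun hx (Sum.inl i)
      simp only [Matrix.mulVec, dotProduct, Fintype.sum_sum_type, hM, blockMat,
        Matrix.of_apply, Pi.zero_apply, Finset.univ_unique, PUnit.default_eq_unit,
        Finset.sum_singleton, neg_mul, one_mul] at h
      linarith
    · have h := congrFun hx (Sum.inr ())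
      simp only [Matrix.mulVec, dotProduct, Fintype.sum_sum_type, hM, blockMat,
        Matrix.of_apply, Pi.zero_apply, Finset.univ_unique, PUnit.default_eq_unit,
        Finset.sum_singleton, zero_mul, one_mul, add_zero] at h
      exact h
  have hkerMT : ∀ x, M.transpose.mulVec x = 0 → x = 0 := by
    intro x hx
    apply ker_block hNEd huniqd x
    · intro j
      have h := congrFun hx (Sum.inl j)
      simp only [Matrix.mulVec, dotProduct, Fintype.sum_sum_type, hM, Matrix.transpose_apply,
        blockMat, Matrix.of_apply, Pi.zero_apply, Finset.univ_unique, PUnit.default_eq_unit,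
        Finset.sum_singleton, one_mul] at h
      simp only [Matrix.of_apply, neg_mul]
      have h2 : ∑ i : {i : Fin m // 0 < p i}, -(R i.1 j.1 * x (Sum.inl i))
          = -∑ i : {i : Fin m // 0 < p i}, R i.1 j.1 * x (Sum.inl i) := by
        rw [Finset.sum_neg_distrib]
      rw [h2]
      linarith
    · have h := congrFun hx (Sum.inr ())
      simp only [Matrix.mulVec, dotProduct, Fintype.sum_sum_type, hM, Matrix.transpose_apply,
        blockMat, Matrix.of_apply, Pi.zero_apply, Finset.univ_unique, PUnit.default_eq_unit,
        Finset.sum_singleton, zero_mul, add_zero, neg_mul, one_mul] at h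
      have h2 : ∑ i : {i : Fin m // 0 < p i}, -x (Sum.inl i)
          = -∑ i : {i : Fin m // 0 < p i}, x (Sum.inl i) := by
        rw [Finset.sum_neg_distrib]
      rw [h2] at h
      linarith
  have hinj : Function.Injective M.mulVecLin := by
    rw [← LinearMap.ker_eq_bot, LinearMap.ker_eq_bot']
    intro x hx
    exact hkerM x (by rwa [Matrix.mulVecLin_apply] at hx)
  have hinjT : Function.Injective M.transpose.mulVecLin := by
    rw [← LinearMap.ker_eq_bot, LinearMap.ker_eq_bot']
    intro x hx
    exact hkerMT x (by rwa [Matrix.mulVecLin_apply] at hx)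
  have h1 := LinearMap.finrank_le_finrank_of_injective hinj
  have h2 := LinearMap.finrank_le_finrank_of_injective hinjT
  rw [Module.finrank_pi, Module.finrank_pi] at h1 h2
  simp only [Fintype.card_sum, Fintype.card_unit] at h1 h2
  have hcard : Fintype.card {i : Fin m // 0 < p i} = Fintype.card {j : Fin n // 0 < q j} := by
    omega
  refine ⟨⟨hinj, ?_⟩, hcard⟩
  have hfr : Module.finrank ℝ (({j : Fin n // 0 < q j} ⊕ Unit) → ℝ)
      = Module.finrank ℝ (({i : Fin m // 0 < p i} ⊕ Unit) → ℝ) := by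
    rw [Module.finrank_pi, Module.finrank_pi]
    simp [Fintype.card_sum, hcard]
  exact (LinearMap.injective_iff_surjective_of_finrank_eq_finrank hfr).mp hinj
end

section
/- Let R ∈ ℝ^{m×n} be a zero-sum game with unique Nash equilibrium (p,q) of value v* where |supp(q)| ≥ 2, satisfying SIISOW. If there exists δ ∈ ℝ^{|J|}, δ ≠ 0, with 1ᵀδ = 0 and R_{IJ}δ = 0, then there exists a strategy r ≠ q such that (p,r) is also a Nash equilibrium — a contradiction. Hence no such δ exists. -/
open Finset
open Filter Topology

private lemma sum_dite₀ {n : ℕ} (P : Fin n → Prop) [DecidablePred P]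
    (g : {j : Fin n // P j} → ℝ) :
    ∑ j : Fin n, (if h : P j then g ⟨j, h⟩ else 0) = ∑ j : {j // P j}, g j := by
  classical
  have h1 : ∑ j : Fin n, (if h : P j then g ⟨j, h⟩ else 0)
      = ∑ j ∈ Finset.univ.filter P, (if h : P j then g ⟨j, h⟩ else 0) := by
    symm
    apply Finset.sum_subset (Finset.filter_subset _ _)
    intro j _ hj
    simp only [Finset.mem_filter, Finset.mem_univ, true_and] at hj
    exact dif_neg hj
  rw [h1, Finset.sum_subtype (p := P) _ (by simp)]
  exact Finset.sum_congr rfl fun j _ => dif_pos j.2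

private lemma pay_eq_rowPay {m n : ℕ} (R : Matrix (Fin m) (Fin n) ℝ) (p : Fin m → ℝ)
    (q : Fin n → ℝ) : pay R p q = ∑ i, p i * rowPay R i q := by
  unfold pay rowPay
  refine Finset.sum_congr rfl fun i _ => ?_
  rw [Finset.mul_sum]
  exact Finset.sum_congr rfl fun j _ => by ring

private lemma pay_eq_colPay {m n : ℕ} (R : Matrix (Fin m) (Fin n) ℝ) (p : Fin m → ℝ)
    (q : Fin n → ℝ) : pay R p q = ∑ j, colPay R p j * q j := by
  unfold pay colPay
  rw [Finset.sum_comm]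
  refine Finset.sum_congr rfl fun j _ => ?_
  rw [Finset.sum_mul]

/-- If `(p,q)` is the unique SIISOW Nash equilibrium of `R` with `|supp q| ≥ 2`, then
there is no nonzero `δ` supported on `J` with `1ᵀδ = 0` and `R_IJ δ = 0`. -/
theorem stmt10 {m n : ℕ} (R : Matrix (Fin m) (Fin n) ℝ)
    (p : Fin m → ℝ) (q : Fin n → ℝ) (v : ℝ)
    (hNE : isNash R p q) (hv : v = pay R p q)
    (huniq : ∀ p' q', isNash R p' q' → p' = p ∧ q' = q)
    (hJ : 2 ≤ Fintype.card {j : Fin n // 0 < q j})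
    (hrowIn : ∀ i, 0 < p i → rowPay R i q = v)
    (hcolIn : ∀ j, 0 < q j → colPay R p j = v)
    (hrowOut : ∀ i, p i = 0 → rowPay R i q < v)
    (hcolOut : ∀ j, q j = 0 → v < colPay R p j) :
    ¬ ∃ δ : {j : Fin n // 0 < q j} → ℝ, δ ≠ 0 ∧
        (∑ j : {j : Fin n // 0 < q j}, δ j = 0) ∧
        ∀ i : {i : Fin m // 0 < p i}, ∑ j : {j : Fin n // 0 < q j}, R i.1 j.1 * δ j = 0 := by
  classical
  rintro ⟨δ, hδne, hδsum, hδR⟩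
  obtain ⟨hp, hq, hbr1, hbr2⟩ := hNE
  -- extend δ by zero
  set δ' : Fin n → ℝ := fun j => if h : 0 < q j then δ ⟨j, h⟩ else 0 with hδ'
  have hδ'sum : ∑ j, δ' j = 0 := by
    rw [hδ', sum_dite₀ (fun j => 0 < q j) δ]; exact hδsum
  have hδ'zero : ∀ j, q j = 0 → δ' j = 0 := by
    intro j hj; simp [hδ', hj]
  have hS : ∀ i : Fin m, 0 < p i → ∑ j, R i j * δ' j = 0 := by
    intro i hi
    have : ∀ j : Fin n, R i j * δ' j = if h : 0 < q j then R i j * δ ⟨j, h⟩ else 0 := by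
      intro j; by_cases h : 0 < q j <;> simp [hδ', h]
    rw [Finset.sum_congr rfl fun j _ => this j,
      sum_dite₀ (fun j => 0 < q j) (fun j => R i j.1 * δ j)]
    exact hδR ⟨i, hi⟩
  -- choose small c > 0
  have htend : ∀ a b : ℝ, Tendsto (fun c : ℝ => a + c * b) (𝓝[>] (0:ℝ)) (𝓝 a) := by
    intro a b
    have : Tendsto (fun c : ℝ => a + c * b) (𝓝 (0:ℝ)) (𝓝 (a + 0 * b)) :=
      (tendsto_const_nhds.add ((continuous_id.mul continuous_const).tendsto 0))
    simpa using this.mono_left nhdsWithin_le_nhds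
  have hA : ∀ᶠ c in 𝓝[>] (0:ℝ), ∀ j, 0 ≤ q j + c * δ' j := by
    rw [Filter.eventually_all]
    intro j
    rcases eq_or_lt_of_le (hq.1 j) with h | h
    · filter_upwards with c; rw [hδ'zero j h.symm, ← h]; simp
    · exact (htend (q j) (δ' j)).eventually_const_lt h |>.mono fun c hc => le_of_lt hc
  have hB : ∀ᶠ c in 𝓝[>] (0:ℝ), ∀ i, p i = 0 →
      rowPay R i q + c * (∑ j, R i j * δ' j) < v := by
    rw [Filter.eventually_all]
    intro i
    by_cases hpi : p i = 0
    · have := (htend (rowPay R i q) (∑ j, R i j * δ' j)).eventually_lt_const (hrowOut i hpi)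
      exact this.mono fun c hc _ => hc
    · filter_upwards with c h; exact absurd h hpi
  have hpos : ∀ᶠ c in 𝓝[>] (0:ℝ), 0 < c := eventually_mem_nhdsWithin.mono fun c hc => hc
  obtain ⟨c, hc0, hcA, hcB⟩ : ∃ c : ℝ, 0 < c ∧ (∀ j, 0 ≤ q j + c * δ' j) ∧
      ∀ i, p i = 0 → rowPay R i q + c * (∑ j, R i j * δ' j) < v := by
    obtain ⟨c, h1, h2, h3⟩ := (hpos.and (hA.and hB)).exists
    exact ⟨c, h1, h2, h3⟩
  -- construct r
  set r : Fin n → ℝ := fun j => q j + c * δ' j with hr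
  have hrs : isSimplex r := by
    constructor
    · exact hcA
    · rw [hr]
      simp only
      rw [Finset.sum_add_distrib, hq.2, ← Finset.mul_sum, hδ'sum]
      ring
  have hrowr : ∀ i, rowPay R i r = rowPay R i q + c * (∑ j, R i j * δ' j) := by
    intro i
    unfold rowPay
    rw [hr]
    simp only
    rw [Finset.mul_sum, ← Finset.sum_add_distrib]
    exact Finset.sum_congr rfl fun j _ => by ring
  have hrowr_le : ∀ i, rowPay R i r ≤ v := by
    intro i
    rcases eq_or_lt_of_le (hp.1 i) with h | h
    · exact le_of_lt (by rw [hrowr]; exact hcB i h.symm)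
    · rw [hrowr, hS i h, hrowIn i h]; simp
  have hpayv : pay R p r = v := by
    rw [pay_eq_rowPay]
    have : ∀ i ∈ Finset.univ, p i * rowPay R i r = p i * v := by
      intro i _
      rcases eq_or_lt_of_le (hp.1 i) with h | h
      · rw [← h]; ring
      · rw [hrowr, hS i h, hrowIn i h]; ring
    rw [Finset.sum_congr rfl this, ← Finset.sum_mul, hp.2, one_mul]
  have hNash : isNash R p r := by
    refine ⟨hp, hrs, ?_, ?_⟩
    · intro p' hp'
      rw [hpayv, pay_eq_rowPay]
      calc ∑ i, p' i * rowPay R i r ≤ ∑ i, p' i * v :=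
            Finset.sum_le_sum fun i _ => mul_le_mul_of_nonneg_left (hrowr_le i) (hp'.1 i)
        _ = v := by rw [← Finset.sum_mul, hp'.2, one_mul]
    · intro q' hq'
      rw [hpayv, pay_eq_colPay]
      calc v = ∑ j, v * q' j := by rw [← Finset.mul_sum, hq'.2, mul_one]
        _ ≤ ∑ j, colPay R p j * q' j := by
            refine Finset.sum_le_sum fun j _ => mul_le_mul_of_nonneg_right ?_ (hq'.1 j)
            rcases eq_or_lt_of_le (hq.1 j) with h | h
            · exact le_of_lt (hcolOut j h.symm)
            · exact le_of_eq (hcolIn j h).symm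
  have hrq : r = q := (huniq p r hNash).2
  -- contradiction with δ ≠ 0
  obtain ⟨j₀, hj₀⟩ := Function.ne_iff.mp hδne
  have : r j₀.1 = q j₀.1 := by rw [hrq]
  rw [hr] at this
  simp only at this
  have hδ'j : δ' j₀.1 = δ j₀ := by simp [hδ', j₀.2]
  have : c * δ j₀ = 0 := by rw [← hδ'j]; linarith
  rcases mul_eq_zero.mp this with h | h
  · exact absurd h (ne_of_gt hc0)
  · exact hj₀ h
end
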